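/- Let q be a plurisubharmonic quadratic form on ℂ^n which is nondegenerate of signature (n, n) (as a real quadratic form on ℝ^(2n)). Then every plurisubharmonic quadratic form q̃ with q̃ ≤ q is also nondegenerate of signature (n, n). -/
import Mathlib


open scoped BigOperators

/-- If `q` is a plurisubharmonic quadratic form on `ℂⁿ`, nondegenerate of signature
`(n,n)` as a real quadratic form on `ℝ^(2n)`, then every plurisubharmonic quadratic
form `q̃ ≤ q` is also nondegenerate of signature `(n,n)`. -/
theorem stmt15 {n : ℕ} (q qt : QuadraticMap ℝ (Fin n → ℂ) ℝ)
    (hpsh : ∀ x : Fin n → ℂ, 0 ≤ (q x + q (Complex.I • x)) / 2)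
    (hpsh' : ∀ x : Fin n → ℂ, 0 ≤ (qt x + qt (Complex.I • x)) / 2)
    (hle : ∀ x, qt x ≤ q x)
    (hnd : ∀ x : Fin n → ℂ, (∀ y, QuadraticMap.polar q x y = 0) → x = 0)
    (hpos : ∃ Lp : Submodule ℝ (Fin n → ℂ),
      Module.finrank ℝ Lp = n ∧ ∀ x ∈ Lp, x ≠ 0 → 0 < q x)
    (hneg : ∃ Lm : Submodule ℝ (Fin n → ℂ),
      Module.finrank ℝ Lm = n ∧ ∀ x ∈ Lm, x ≠ 0 → q x < 0) :
    (∀ x : Fin n → ℂ, (∀ y, QuadraticMap.polar qt x y = 0) → x = 0) ∧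
    (∃ Lp : Submodule ℝ (Fin n → ℂ),
      Module.finrank ℝ Lp = n ∧ ∀ x ∈ Lp, x ≠ 0 → 0 < qt x) ∧
    (∃ Lm : Submodule ℝ (Fin n → ℂ),
      Module.finrank ℝ Lm = n ∧ ∀ x ∈ Lm, x ≠ 0 → qt x < 0) := by
  obtain ⟨Lm, hLmrank, hLmneg⟩ := hneg
  have hqtneg : ∀ x ∈ Lm, x ≠ 0 → qt x < 0 := fun x hx hx0 =>
    lt_of_le_of_lt (hle x) (hLmneg x hx hx0)
  -- multiplication by I as an ℝ-linear equivalence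
  let e : (Fin n → ℂ) ≃ₗ[ℝ] (Fin n → ℂ) :=
    { toFun := fun x => Complex.I • x
      invFun := fun x => (-Complex.I) • x
      map_add' := fun x y => smul_add _ _ _
      map_smul' := fun c x => smul_comm _ _ _
      left_inv := fun x => by simp [smul_smul]
      right_inv := fun x => by simp [smul_smul] }
  set Lp' := Lm.map (e : (Fin n → ℂ) →ₗ[ℝ] (Fin n → ℂ)) with hLp'
  have hLp'rank : Module.finrank ℝ Lp' = n := by
    rw [hLp', LinearEquiv.finrank_map_eq, hLmrank]
  have hqtpos : ∀ x ∈ Lp', x ≠ 0 → 0 < qt x := by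
    rintro _ ⟨x, hx, rfl⟩ hx0
    have hx0' : x ≠ 0 := by
      rintro rfl; exact hx0 (by simp [e])
    have h1 := hpsh' x
    have h2 := hqtneg x hx hx0'
    have he : (e : (Fin n → ℂ) →ₗ[ℝ] (Fin n → ℂ)) x = Complex.I • x := rfl
    rw [he]; linarith
  refine ⟨?_, ⟨Lp', hLp'rank, hqtpos⟩, ⟨Lm, hLmrank, hqtneg⟩⟩
  -- nondegeneracy
  have hdisj : Lm ⊓ Lp' = ⊥ := by
    rw [Submodule.eq_bot_iff]
    rintro x ⟨hx1, hx2⟩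
    by_contra hx0
    exact absurd (hqtpos x hx2 hx0) (not_lt.2 (hqtneg x hx1 hx0).le)
  have hsum : Lm ⊔ Lp' = ⊤ := by
    apply Submodule.eq_top_of_finrank_eq
    have h := Submodule.finrank_sup_add_finrank_inf_eq Lm Lp'
    rw [hdisj, finrank_bot, add_zero, hLmrank, hLp'rank] at h
    rw [h]
    have : Module.finrank ℝ (Fin n → ℂ) = n * 2 := by
      simp [Module.finrank_pi_fintype, Complex.finrank_real_complex,
        Finset.sum_const]
    omega
  intro x hx
  have hqx : qt x = 0 := by
    have h := hx x
    have hp : QuadraticMap.polar qt x x = 2 • qt x := QuadraticMap.polar_self qt x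
    rw [hp] at h
    have h2 : qt x + qt x = 0 := by simpa [two_smul] using h
    linarith
  obtain ⟨a, ha, b, hb, hab⟩ : ∃ a ∈ Lm, ∃ b ∈ Lp', a + b = x :=
    Submodule.mem_sup.mp (hsum ▸ Submodule.mem_top)
  have hxa : a = x - b := by rw [← hab]; abel
  have hpol := hx (-b)
  rw [QuadraticMap.polar] at hpol
  have hqa : qt a = qt b := by
    rw [hxa]
    rw [QuadraticMap.map_neg] at hpol
    have h1 : qt (x + -b) = qt b := by linarith
    simpa [sub_eq_add_neg] using h1
  have ha0 : a = 0 := by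
    by_contra ha0
    have h1 := hqtneg a ha ha0
    rcases eq_or_ne b 0 with rfl | hb0
    · simp at hqa; linarith
    · have h2 := hqtpos b hb hb0
      linarith
  have hb0 : b = 0 := by
    by_contra hb0
    have h2 := hqtpos b hb hb0
    rw [ha0] at hqa
    simp at hqa
    linarith
  rw [← hab, ha0, hb0, add_zero]
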